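/- Let V : ℝ^d → ℝ be bounded Lipschitz, μ ∈ P₁(ℝ^d), θ > 0, and let (μ_n) be a sequence in P₁(ℝ^d) with W₁(μ_n, μ) → 0. Let m(ρ) = inf{∫ V dν : ν ∈ P₁(ℝ^d), W₁(ν, ρ) ≤ θ}. Then m(μ_n) → m(μ) as n → ∞. -/

import Mathlib

open MeasureTheory Metric Set Filter Topology ENNReal NNReal

/-- The 1-Wasserstein distance between two measures on a metric measurable
space, defined as the infimum of the transport cost over all couplings. -/
noncomputable def W1 {X : Type*} [MeasurableSpace X] [PseudoMetricSpace X]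
    (μ ν : Measure X) : ℝ≥0∞ :=
  ⨅ (π : Measure (X × X)) (_ : π.map Prod.fst = μ) (_ : π.map Prod.snd = ν),
    ∫⁻ p, ENNReal.ofReal (dist p.1 p.2) ∂π

/-- The distributionally robust value: the infimum of `∫ V dν` over probability
measures `ν` on `ℝ^d` with finite first moment lying in the closed
1-Wasserstein ball of radius `r` around `μ`. -/
noncomputable def robustVal (d : ℕ) (V : EuclideanSpace ℝ (Fin d) → ℝ)
    (μ : Measure (EuclideanSpace ℝ (Fin d))) (r : ℝ) : ℝ :=
  sInf {s | ∃ ν : Measure (EuclideanSpace ℝ (Fin d)), IsProbabilityMeasure ν ∧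
    Integrable (fun x => ‖x‖) ν ∧ W1 ν μ ≤ ENNReal.ofReal r ∧ s = ∫ x, V x ∂ν}

section Aux

open ProbabilityTheory

variable {X : Type*} [MeasurableSpace X] [PseudoMetricSpace X]

/-- transport cost of a coupling -/
noncomputable def W1cost (π : Measure (X × X)) : ℝ≥0∞ :=
  ∫⁻ p, ENNReal.ofReal (dist p.1 p.2) ∂π

lemma W1_le_cost {μ ν : Measure X} (π : Measure (X × X))
    (h1 : π.map Prod.fst = μ) (h2 : π.map Prod.snd = ν) :
    W1 μ ν ≤ W1cost π := by
  refine iInf_le_of_le π ?_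
  rw [iInf_pos h1, iInf_pos h2]
  rfl

lemma exists_coupling_of_W1_lt {μ ν : Measure X} {t : ℝ≥0∞} (h : W1 μ ν < t) :
    ∃ π : Measure (X × X), π.map Prod.fst = μ ∧ π.map Prod.snd = ν ∧
      W1cost π < t := by
  simp only [W1, iInf_lt_iff] at h
  obtain ⟨π, h1, h2, hc⟩ := h
  exact ⟨π, h1, h2, hc⟩

variable [OpensMeasurableSpace X] [SecondCountableTopology X]

lemma measurable_distfun : Measurable (fun p : X × X => ENNReal.ofReal (dist p.1 p.2)) :=
  ENNReal.measurable_ofReal.comp measurable_dist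

lemma W1_self (μ : Measure X) : W1 μ μ = 0 := by
  have hdiag : Measurable (fun x : X => (x, x)) := measurable_id.prodMk measurable_id
  refine le_antisymm ?_ zero_le
  have h := W1_le_cost (μ := μ) (ν := μ) (μ.map (fun x => (x, x))) ?_ ?_
  · refine h.trans_eq ?_
    rw [W1cost, lintegral_map measurable_distfun hdiag]
    simp
  · rw [Measure.map_map measurable_fst hdiag]; simp [Function.comp_def]
  · rw [Measure.map_map measurable_snd hdiag]; simp [Function.comp_def]

lemma W1_symm_le (μ ν : Measure X) : W1 ν μ ≤ W1 μ ν := by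
  refine le_iInf fun π => le_iInf fun h1 => le_iInf fun h2 => ?_
  have hswap : Measurable (Prod.swap : X × X → X × X) := measurable_swap
  have h := W1_le_cost (μ := ν) (ν := μ) (π.map Prod.swap) ?_ ?_
  · refine h.trans_eq ?_
    rw [W1cost, lintegral_map measurable_distfun hswap]
    simp_rw [Prod.fst_swap, Prod.snd_swap, dist_comm]
  · rw [Measure.map_map measurable_fst hswap]; exact h2
  · rw [Measure.map_map measurable_snd hswap]; exact h1

lemma W1_symm (μ ν : Measure X) : W1 μ ν = W1 ν μ :=
  le_antisymm (W1_symm_le ν μ) (W1_symm_le μ ν)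

variable [StandardBorelSpace X] [Nonempty X]

/-- Gluing lemma: couplings compose with additive cost. -/
lemma glue_coupling {ν ρ ρ' : Measure X} [IsProbabilityMeasure ρ]
    (π1 π2 : Measure (X × X))
    (h1f : π1.map Prod.fst = ν) (h1s : π1.map Prod.snd = ρ)
    (h2f : π2.map Prod.fst = ρ) (h2s : π2.map Prod.snd = ρ') :
    ∃ π : Measure (X × X), π.map Prod.fst = ν ∧ π.map Prod.snd = ρ' ∧
      W1cost π ≤ W1cost π1 + W1cost π2 := by
  have hπ1 : IsProbabilityMeasure π1 := by
    constructor
    have : (π1.map Prod.snd) univ = 1 := by rw [h1s]; exact measure_univ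
    rwa [Measure.map_apply measurable_snd MeasurableSet.univ, preimage_univ] at this
  have hπ2 : IsProbabilityMeasure π2 := by
    constructor
    have : (π2.map Prod.fst) univ = 1 := by rw [h2f]; exact measure_univ
    rwa [Measure.map_apply measurable_fst MeasurableSet.univ, preimage_univ] at this
  set σ : Measure (X × X) := π1.map Prod.swap with hσdef
  have hσ : IsProbabilityMeasure σ := Measure.isProbabilityMeasure_map measurable_swap.aemeasurable
  have hσfst : σ.fst = ρ := by
    rw [Measure.fst, hσdef, Measure.map_map measurable_fst measurable_swap]
    simpa [Function.comp_def] using h1s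
  have hπ2fst : π2.fst = ρ := h2f
  set κ := σ.condKernel with hκdef
  set η := π2.condKernel with hηdef
  have hκ : ρ ⊗ₘ κ = σ := by rw [← hσfst]; exact σ.disintegrate κ
  have hη : ρ ⊗ₘ η = π2 := by rw [← hπ2fst]; exact π2.disintegrate η
  set τ : Measure (X × (X × X)) := ρ ⊗ₘ (κ ×ₖ η) with hτdef
  have hκη : ∀ (ξ : Measure X), IsProbabilityMeasure ξ → True := fun _ _ => trivial
  have hm21 : Measurable fun p : X × (X × X) => p.2.1 :=
    measurable_fst.comp measurable_snd
  have hm22 : Measurable fun p : X × (X × X) => p.2.2 :=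
    measurable_snd.comp measurable_snd
  have hσsnd : σ.map Prod.snd = ν := by
    rw [hσdef, Measure.map_map measurable_snd measurable_swap]
    simpa [Function.comp_def] using h1f
  refine ⟨τ.map Prod.snd, ?_, ?_, ?_⟩
  · rw [Measure.map_map measurable_fst measurable_snd]
    have : (Prod.fst ∘ Prod.snd : X × (X × X) → X) = fun p => p.2.1 := rfl
    rw [this, ← hσsnd, ← hκ]
    ext s hs
    rw [Measure.map_apply hm21 hs, Measure.map_apply measurable_snd hs,
      Measure.compProd_apply (hm21 hs), Measure.compProd_apply (measurable_snd hs)]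
    refine lintegral_congr fun a => ?_
    have h1 : Prod.mk a ⁻¹' ((fun p : X × (X × X) => p.2.1) ⁻¹' s) = s ×ˢ univ := by
      ext y; simp [Set.mem_prod]
    have h2 : Prod.mk a ⁻¹' ((Prod.snd : X × X → X) ⁻¹' s) = s := by ext y; simp
    rw [h1, h2, ProbabilityTheory.Kernel.prod_apply, Measure.prod_prod, measure_univ, mul_one]
  · rw [Measure.map_map measurable_snd measurable_snd]
    have : (Prod.snd ∘ Prod.snd : X × (X × X) → X) = fun p => p.2.2 := rfl
    rw [this, ← h2s, ← hη]
    ext s hs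
    rw [Measure.map_apply hm22 hs, Measure.map_apply measurable_snd hs,
      Measure.compProd_apply (hm22 hs), Measure.compProd_apply (measurable_snd hs)]
    refine lintegral_congr fun a => ?_
    have h1 : Prod.mk a ⁻¹' ((fun p : X × (X × X) => p.2.2) ⁻¹' s) = univ ×ˢ s := by
      ext y; simp [Set.mem_prod]
    have h2 : Prod.mk a ⁻¹' ((Prod.snd : X × X → X) ⁻¹' s) = s := by ext y; simp
    rw [h1, h2, ProbabilityTheory.Kernel.prod_apply, Measure.prod_prod, measure_univ, one_mul]
  · have hf : Measurable fun p : X × (X × X) => ENNReal.ofReal (dist p.2.1 p.2.2) :=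
      measurable_distfun.comp (hm21.prodMk hm22)
    rw [W1cost, lintegral_map measurable_distfun measurable_snd]
    have step1 : ∫⁻ p, ENNReal.ofReal (dist (Prod.snd p).1 (Prod.snd p).2) ∂τ
        = ∫⁻ a, ∫⁻ y, ENNReal.ofReal (dist y.1 y.2) ∂((κ ×ₖ η) a) ∂ρ := by
      rw [hτdef, Measure.lintegral_compProd hf]
    rw [step1]
    have key : ∀ a : X, ∫⁻ y, ENNReal.ofReal (dist y.1 y.2) ∂((κ ×ₖ η) a)
        ≤ (∫⁻ x, ENNReal.ofReal (dist x a) ∂(κ a)) +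
          ∫⁻ z, ENNReal.ofReal (dist a z) ∂(η a) := by
      intro a
      rw [ProbabilityTheory.Kernel.prod_apply]
      have hb : ∀ y : X × X, ENNReal.ofReal (dist y.1 y.2)
          ≤ ENNReal.ofReal (dist y.1 a) + ENNReal.ofReal (dist a y.2) := fun y => by
        rw [← ENNReal.ofReal_add dist_nonneg dist_nonneg]
        exact ENNReal.ofReal_le_ofReal (dist_triangle _ _ _)
      refine le_trans (lintegral_mono hb) ?_
      have hmf : Measurable fun y : X × X => ENNReal.ofReal (dist y.1 a) := by fun_prop
      rw [lintegral_add_left hmf]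
      have e1 : ∫⁻ y : X × X, ENNReal.ofReal (dist y.1 a) ∂((κ a).prod (η a))
          = ∫⁻ x, ENNReal.ofReal (dist x a) ∂(κ a) := by
        have h := lintegral_map (μ := (κ a).prod (η a))
          (f := fun x : X => ENNReal.ofReal (dist x a)) (by fun_prop)
          (measurable_fst : Measurable (Prod.fst : X × X → X))
        rw [Measure.map_fst_prod, measure_univ, one_smul] at h
        exact h.symm
      have e2 : ∫⁻ y : X × X, ENNReal.ofReal (dist a y.2) ∂((κ a).prod (η a))
          = ∫⁻ z, ENNReal.ofReal (dist a z) ∂(η a) := by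
        have h := lintegral_map (μ := (κ a).prod (η a))
          (f := fun z : X => ENNReal.ofReal (dist a z)) (by fun_prop)
          (measurable_snd : Measurable (Prod.snd : X × X → X))
        rw [Measure.map_snd_prod, measure_univ, one_smul] at h
        exact h.symm
      rw [e1, e2]
    refine le_trans (lintegral_mono key) ?_
    have hmA : Measurable fun a : X => ∫⁻ x, ENNReal.ofReal (dist x a) ∂(κ a) :=
      Measurable.lintegral_kernel_prod_right'
        (ENNReal.measurable_ofReal.comp (measurable_snd.dist measurable_fst))
    rw [lintegral_add_left hmA]
    have eA : ∫⁻ a, ∫⁻ x, ENNReal.ofReal (dist x a) ∂(κ a) ∂ρ = W1cost π1 := by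
      have h1 : ∫⁻ p : X × X, ENNReal.ofReal (dist p.2 p.1) ∂(ρ ⊗ₘ κ)
          = ∫⁻ a, ∫⁻ x, ENNReal.ofReal (dist x a) ∂(κ a) ∂ρ :=
        Measure.lintegral_compProd
          (f := fun p : X × X => ENNReal.ofReal (dist p.2 p.1)) (by fun_prop)
      rw [← h1, hκ, hσdef, lintegral_map
        (f := fun p : X × X => ENNReal.ofReal (dist p.2 p.1)) (by fun_prop)
        measurable_swap]
      simp only [Prod.fst_swap, Prod.snd_swap]
      rfl
    have eB : ∫⁻ a, ∫⁻ z, ENNReal.ofReal (dist a z) ∂(η a) ∂ρ = W1cost π2 := by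
      have h1 : ∫⁻ p : X × X, ENNReal.ofReal (dist p.1 p.2) ∂(ρ ⊗ₘ η)
          = ∫⁻ a, ∫⁻ z, ENNReal.ofReal (dist a z) ∂(η a) ∂ρ :=
        Measure.lintegral_compProd
          (f := fun p : X × X => ENNReal.ofReal (dist p.1 p.2)) (by fun_prop)
      rw [← h1, hη]; rfl
    rw [eA, eB]

end Aux

section Robust

variable {d : ℕ}

local notation "E" => EuclideanSpace ℝ (Fin d)

lemma robust_set_def (V : E → ℝ) (ρ : Measure E) (r : ℝ) :
    robustVal d V ρ r = sInf {s | ∃ ν : Measure E, IsProbabilityMeasure ν ∧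
      Integrable (fun x => ‖x‖) ν ∧ W1 ν ρ ≤ ENNReal.ofReal r ∧ s = ∫ x, V x ∂ν} := rfl

lemma integrable_of_bound (V : E → ℝ) (hVm : Measurable V) {C : ℝ} (hbd : ∀ x, |V x| ≤ C)
    (ν : Measure E) [IsFiniteMeasure ν] : Integrable V ν :=
  Integrable.mono' (integrable_const C) hVm.aestronglyMeasurable
    (ae_of_all _ fun x => by simpa [Real.norm_eq_abs] using hbd x)

lemma abs_integral_le (V : E → ℝ) {C : ℝ} (hbd : ∀ x, |V x| ≤ C)
    (ν : Measure E) [IsProbabilityMeasure ν] : |∫ x, V x ∂ν| ≤ C := by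
  have h := norm_integral_le_of_norm_le_const (μ := ν) (f := V) (C := C)
    (ae_of_all _ fun x => by simpa [Real.norm_eq_abs] using hbd x)
  simpa [Real.norm_eq_abs] using h

lemma robust_set_nonempty (V : E → ℝ) {θ : ℝ} (hθ : 0 ≤ θ)
    (ρ : Measure E) (hρ : IsProbabilityMeasure ρ) (hρ1 : Integrable (fun x => ‖x‖) ρ) :
    {s | ∃ ν : Measure E, IsProbabilityMeasure ν ∧
      Integrable (fun x => ‖x‖) ν ∧ W1 ν ρ ≤ ENNReal.ofReal θ ∧
      s = ∫ x, V x ∂ν}.Nonempty :=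
  ⟨∫ x, V x ∂ρ, ρ, hρ, hρ1, by rw [W1_self]; exact zero_le, rfl⟩

lemma robust_set_bdd (V : E → ℝ) {C : ℝ} (hbd : ∀ x, |V x| ≤ C) {θ : ℝ}
    (ρ : Measure E) :
    BddBelow {s | ∃ ν : Measure E, IsProbabilityMeasure ν ∧
      Integrable (fun x => ‖x‖) ν ∧ W1 ν ρ ≤ ENNReal.ofReal θ ∧
      s = ∫ x, V x ∂ν} := by
  refine ⟨-C, fun s hs => ?_⟩
  obtain ⟨ν, hν, -, -, rfl⟩ := hs
  have := abs_integral_le V hbd ν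
  exact neg_le_of_abs_le this

lemma robustVal_le_of_W1_le (V : E → ℝ) (hVm : Measurable V)
    {C : ℝ} (hbd : ∀ x, |V x| ≤ C) {θ ε : ℝ} (hθ : 0 < θ) (hε : 0 ≤ ε)
    {ρ ρ' : Measure E} (hρ : IsProbabilityMeasure ρ)
    (hρ1 : Integrable (fun x => ‖x‖) ρ)
    (hρ' : IsProbabilityMeasure ρ') (hρ'1 : Integrable (fun x => ‖x‖) ρ')
    (hW : W1 ρ ρ' ≤ ENNReal.ofReal ε) :
    robustVal d V ρ' θ ≤ robustVal d V ρ θ + 2 * C * ε / θ := by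
  have hC : 0 ≤ C := le_trans (abs_nonneg _) (hbd 0)
  refine le_of_forall_pos_le_add fun δ' hδ' => ?_
  set δ : ℝ := δ' / (4 * C / θ + 1) with hδdef
  have hden : 0 < 4 * C / θ + 1 := by positivity
  have hδ : 0 < δ := div_pos hδ' hden
  -- near-optimal ν for ρ
  obtain ⟨s, hsmem, hslt⟩ := Real.lt_sInf_add_pos
    (robust_set_nonempty V hθ.le ρ hρ hρ1) hδ
  obtain ⟨ν, hν, hν1, hνW, rfl⟩ := hsmem
  rw [← robust_set_def] at hslt
  -- couplings
  have h1 : W1 ν ρ < ENNReal.ofReal (θ + δ) :=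
    lt_of_le_of_lt hνW (ENNReal.ofReal_lt_ofReal_iff (by linarith)|>.2 (by linarith))
  obtain ⟨π1, hπ1f, hπ1s, hc1⟩ := exists_coupling_of_W1_lt h1
  have h2 : W1 ρ ρ' < ENNReal.ofReal (ε + δ) :=
    lt_of_le_of_lt hW (ENNReal.ofReal_lt_ofReal_iff (by linarith)|>.2 (by linarith))
  obtain ⟨π2, hπ2f, hπ2s, hc2⟩ := exists_coupling_of_W1_lt h2
  obtain ⟨π, hπf, hπs, hcost⟩ := glue_coupling π1 π2 hπ1f hπ1s hπ2f hπ2s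
  set T : ℝ := θ + ε + 2 * δ with hTdef
  have hT : 0 < T := by positivity
  have hcostπ : W1cost π ≤ ENNReal.ofReal T := by
    refine hcost.trans ?_
    calc W1cost π1 + W1cost π2 ≤ ENNReal.ofReal (θ + δ) + ENNReal.ofReal (ε + δ) :=
          add_le_add hc1.le hc2.le
      _ = ENNReal.ofReal T := by
          rw [← ENNReal.ofReal_add (by linarith) (by linarith)]; rw [hTdef]; ring_nf
  set lam : ℝ := (ε + 2 * δ) / T with hlamdef
  have hlam0 : 0 ≤ lam := by positivity
  have h1mlam : 1 - lam = θ / T := by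
    rw [hlamdef]
    rw [sub_eq_iff_eq_add, ← add_div, eq_div_iff hT.ne']
    rw [hTdef]; ring
  have h1mlam0 : 0 ≤ 1 - lam := by rw [h1mlam]; positivity
  set ν' : Measure E := ENNReal.ofReal (1 - lam) • ν + ENNReal.ofReal lam • ρ' with hν'def
  have hsum : ENNReal.ofReal (1 - lam) + ENNReal.ofReal lam = 1 := by
    rw [← ENNReal.ofReal_add h1mlam0 hlam0]; norm_num
  have hν'p : IsProbabilityMeasure ν' := by
    constructor
    rw [hν'def]
    simp only [Measure.add_apply, Measure.smul_apply, smul_eq_mul, measure_univ, mul_one]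
    exact hsum
  have hν'1 : Integrable (fun x => ‖x‖) ν' :=
    (hν1.smul_measure ENNReal.ofReal_ne_top).add_measure
      (hρ'1.smul_measure ENNReal.ofReal_ne_top)
  -- W1 bound for ν'
  have hdiag : Measurable (fun x : E => (x, x)) := measurable_id.prodMk measurable_id
  set τ : Measure (E × E) := ENNReal.ofReal (1 - lam) • π +
    ENNReal.ofReal lam • (ρ'.map (fun x => (x, x))) with hτdef
  have hτf : τ.map Prod.fst = ν' := by
    rw [hτdef, Measure.map_add _ _ measurable_fst, Measure.map_smul, Measure.map_smul,
      hπf, Measure.map_map measurable_fst hdiag]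
    simp [hν'def, Function.comp_def]
  have hτs : τ.map Prod.snd = ρ' := by
    rw [hτdef, Measure.map_add _ _ measurable_snd, Measure.map_smul, Measure.map_smul,
      hπs, Measure.map_map measurable_snd hdiag]
    simp only [Function.comp_def, Measure.map_id']
    rw [← add_smul, hsum, one_smul]
  have hτcost : W1cost τ ≤ ENNReal.ofReal θ := by
    rw [W1cost, hτdef, lintegral_add_measure, lintegral_smul_measure, lintegral_smul_measure]
    have hz : ∫⁻ p, ENNReal.ofReal (dist p.1 p.2) ∂(ρ'.map (fun x => (x, x))) = 0 := by
      rw [lintegral_map measurable_distfun hdiag]; simp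
    rw [hz, smul_zero, add_zero, smul_eq_mul]
    calc ENNReal.ofReal (1 - lam) * W1cost π
        ≤ ENNReal.ofReal (1 - lam) * ENNReal.ofReal T := mul_le_mul_right hcostπ _
      _ = ENNReal.ofReal ((1 - lam) * T) := (ENNReal.ofReal_mul h1mlam0).symm
      _ = ENNReal.ofReal θ := by
          congr 1
          rw [h1mlam]
          field_simp
  have hν'W : W1 ν' ρ' ≤ ENNReal.ofReal θ := (W1_le_cost τ hτf hτs).trans hτcost
  -- value of ν'
  have hIν : Integrable V ν := integrable_of_bound V hVm hbd ν
  have hIρ' : Integrable V ρ' := integrable_of_bound V hVm hbd ρ'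
  have hval : ∫ x, V x ∂ν' = (1 - lam) * ∫ x, V x ∂ν + lam * ∫ x, V x ∂ρ' := by
    rw [hν'def, integral_add_measure (hIν.smul_measure ENNReal.ofReal_ne_top)
      (hIρ'.smul_measure ENNReal.ofReal_ne_top), integral_smul_measure,
      integral_smul_measure, ENNReal.toReal_ofReal h1mlam0, ENNReal.toReal_ofReal hlam0]
    simp [smul_eq_mul]
  have hle : robustVal d V ρ' θ ≤ ∫ x, V x ∂ν' := by
    rw [robust_set_def]
    exact csInf_le (robust_set_bdd V hbd ρ') ⟨ν', hν'p, hν'1, hν'W, rfl⟩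
  -- arithmetic
  have ha : |∫ x, V x ∂ν| ≤ C := abs_integral_le V hbd ν
  have hb : |∫ x, V x ∂ρ'| ≤ C := abs_integral_le V hbd ρ'
  have hlamle : lam ≤ (ε + 2 * δ) / θ := by
    rw [hlamdef]
    apply div_le_div_of_nonneg_left (by linarith) hθ
    linarith
  have habs : ∫ x, V x ∂ν' ≤ ∫ x, V x ∂ν + lam * (2 * C) := by
    rw [hval]
    have h1 : ∫ x, V x ∂ρ' - ∫ x, V x ∂ν ≤ 2 * C := by
      have := abs_le.1 ha; have := abs_le.1 hb; linarith
    nlinarith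
  have hδeq : 2 * C * ((ε + 2 * δ) / θ) = 2 * C * ε / θ + 4 * C * δ / θ := by ring
  have hδ'eq : δ * (4 * C / θ + 1) = δ' := by
    rw [hδdef]; field_simp
  have h2Cθ : 0 ≤ 2 * C / θ := by positivity
  calc robustVal d V ρ' θ ≤ ∫ x, V x ∂ν' := hle
    _ ≤ ∫ x, V x ∂ν + lam * (2 * C) := habs
    _ ≤ (robustVal d V ρ θ + δ) + ((ε + 2 * δ) / θ) * (2 * C) := by
        have : lam * (2 * C) ≤ ((ε + 2 * δ) / θ) * (2 * C) :=
          mul_le_mul_of_nonneg_right hlamle (by linarith)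
        linarith
    _ = robustVal d V ρ θ + 2 * C * ε / θ + (4 * C * δ / θ + δ) := by ring
    _ ≤ robustVal d V ρ θ + 2 * C * ε / θ + δ' := by
        rw [← hδ'eq]
        have : 4 * C * δ / θ + δ = δ * (4 * C / θ + 1) := by ring
        linarith [this.ge]

end Robust

/-- Stability of the robust value under perturbation of the center: if
`W₁(μₙ, μ) → 0` then `m(μₙ) → m(μ)` where
`m(ρ) = inf {∫ V dν : W₁(ν, ρ) ≤ θ}`. -/
theorem robustVal_center_stability (d : ℕ)
    (V : EuclideanSpace ℝ (Fin d) → ℝ) (K : ℝ≥0) (hLip : LipschitzWith K V)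
    (C : ℝ) (hbd : ∀ x, |V x| ≤ C) (θ : ℝ) (hθ : 0 < θ)
    (μ : Measure (EuclideanSpace ℝ (Fin d))) (hμ : IsProbabilityMeasure μ)
    (hμ1 : Integrable (fun x => ‖x‖) μ)
    (μn : ℕ → Measure (EuclideanSpace ℝ (Fin d)))
    (hμn : ∀ n, IsProbabilityMeasure (μn n))
    (hμn1 : ∀ n, Integrable (fun x => ‖x‖) (μn n))
    (hconv : Tendsto (fun n => W1 (μn n) μ) atTop (nhds 0)) :
    Tendsto (fun n => robustVal d V (μn n) θ) atTop
      (nhds (robustVal d V μ θ)) := by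
  have hVm : Measurable V := hLip.continuous.measurable
  have hC : 0 ≤ C := le_trans (abs_nonneg _) (hbd 0)
  rw [Metric.tendsto_atTop]
  intro ε' hε'
  set ε : ℝ := θ * ε' / (2 * C + 1) with hεdef
  have hεpos : 0 < ε := by positivity
  have hev : ∀ᶠ n in atTop, W1 (μn n) μ < ENNReal.ofReal ε :=
    hconv.eventually (gt_mem_nhds (ENNReal.ofReal_pos.2 hεpos))
  obtain ⟨N, hN⟩ := eventually_atTop.1 hev
  refine ⟨N, fun n hn => ?_⟩
  have hWn : W1 (μn n) μ ≤ ENNReal.ofReal ε := (hN n hn).le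
  have hWn' : W1 μ (μn n) ≤ ENNReal.ofReal ε := by rw [W1_symm]; exact hWn
  have h1 : robustVal d V (μn n) θ ≤ robustVal d V μ θ + 2 * C * ε / θ :=
    robustVal_le_of_W1_le V hVm hbd hθ hεpos.le hμ hμ1 (hμn n) (hμn1 n) hWn'
  have h2 : robustVal d V μ θ ≤ robustVal d V (μn n) θ + 2 * C * ε / θ :=
    robustVal_le_of_W1_le V hVm hbd hθ hεpos.le (hμn n) (hμn1 n) hμ hμ1 hWn
  have hkey : 2 * C * ε / θ < ε' := by
    have heq : 2 * C * ε / θ = 2 * C * ε' / (2 * C + 1) := by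
      rw [hεdef]; field_simp
    rw [heq, div_lt_iff₀ (by positivity)]
    nlinarith
  rw [Real.dist_eq]
  refine lt_of_le_of_lt (abs_sub_le_iff.2 ⟨by linarith, by linarith⟩) hkey
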